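/- Let q = q¹ ⊗ ⋯ ⊗ q^m ∈ Q be such that V is q-integrable and the entropies H(q¹), …, H(q^m) are all finite, and fix i ∈ [m]. Then D_KL(q‖p) = D_KL(q^i ‖ T_i(q^{−i})) − H(q^{−i}) + log Z − log( ∫_ℝ e^{−V̄_i(x, q^{−i})} dx ), where q^{−i} = q¹ ⊗ ⋯ ⊗ q^{i−1} ⊗ q^{i+1} ⊗ ⋯ ⊗ q^m. -/

import Mathlib

open MeasureTheory ENNReal

noncomputable section

open scoped Classical in
/-- Kullback--Leibler divergence, valued in `EReal`. -/
def KL {E : Type*} [MeasurableSpace E] (q p : Measure E) : EReal :=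
  if q ≪ p ∧ Integrable (fun x => Real.log ((q.rnDeriv p x).toReal)) q
  then ((∫ x, Real.log ((q.rnDeriv p x).toReal) ∂q : ℝ) : EReal)
  else ⊤

/-- The target measure with density `e^{-V} / Z` where `Z = ∫ e^{-V}`. -/
def target {m : ℕ} (V : (Fin m → ℝ) → ℝ) : Measure (Fin m → ℝ) :=
  volume.withDensity fun x =>
    ENNReal.ofReal (Real.exp (-V x) / ∫ y, Real.exp (-V y))

/-- The differential entropy `H(q) = −∫ ρ log ρ` of a measure `q` on ℝ^d with Lebesgue
density `ρ`. -/
def entropy {d : ℕ} (q : Measure (Fin d → ℝ)) : ℝ :=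
  -∫ x, (q.rnDeriv volume x).toReal * Real.log ((q.rnDeriv volume x).toReal)

/-- The differential entropy of a measure on ℝ. -/
def entropyR (q : Measure ℝ) : ℝ :=
  -∫ x, (q.rnDeriv volume x).toReal * Real.log ((q.rnDeriv volume x).toReal)

/-- The approximate potential `V̄_i(x, μ) = E_{y∼μ} V(y with x inserted in coordinate i)`. -/
def Vbar {m : ℕ} (V : (Fin (m + 1) → ℝ) → ℝ) (i : Fin (m + 1))
    (μ : Measure (Fin m → ℝ)) (x : ℝ) : ℝ :=
  ∫ y, V (i.insertNth x y) ∂μ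

/-- The transform `T_i(μ)`: the probability measure on ℝ with density proportional
to `e^{−V̄_i(·, μ)}`. -/
def Ti {m : ℕ} (V : (Fin (m + 1) → ℝ) → ℝ) (i : Fin (m + 1))
    (μ : Measure (Fin m → ℝ)) : Measure ℝ :=
  volume.withDensity fun x =>
    ENNReal.ofReal (Real.exp (-(Vbar V i μ x)) / ∫ t, Real.exp (-(Vbar V i μ t)))

lemma lintegral_pi_prod : ∀ {n : ℕ} (μ : Fin n → Measure ℝ) [∀ i, SigmaFinite (μ i)]
    (ρ : Fin n → ℝ → ℝ≥0∞), (∀ i, Measurable (ρ i)) →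
    ∫⁻ x : Fin n → ℝ, ∏ i, ρ i (x i) ∂Measure.pi μ = ∏ i, ∫⁻ t, ρ i t ∂(μ i) := by
  intro n
  induction n with
  | zero =>
    intro μ _ ρ hρ
    simp [Finset.univ_eq_empty, lintegral_one, Measure.pi_empty_univ]
  | succ n ih =>
    intro μ _ ρ hρ
    have hp := MeasureTheory.measurePreserving_piFinSuccAbove μ 0
    set e := MeasurableEquiv.piFinSuccAbove (fun _ : Fin (n+1) => ℝ) 0 with he
    have hmeas : Measurable (fun y : ℝ × (Fin n → ℝ) => ρ 0 y.1 * ∏ j, ρ j.succ (y.2 j)) :=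
      ((hρ 0).comp measurable_fst).mul
        (Finset.measurable_prod _ fun j _ => (hρ j.succ).comp ((measurable_pi_apply j).comp measurable_snd))
    have hpi : (Measure.pi fun j => μ ((0:Fin (n+1)).succAbove j)) = Measure.pi fun j : Fin n => μ j.succ := by
      simp only [Fin.zero_succAbove]
    calc ∫⁻ x : Fin (n+1) → ℝ, ∏ i, ρ i (x i) ∂Measure.pi μ
        = ∫⁻ x, (fun y : ℝ × (Fin n → ℝ) => ρ 0 y.1 * ∏ j, ρ j.succ (y.2 j)) (e x) ∂Measure.pi μ := by
          refine lintegral_congr fun x => ?_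
          simp [he, MeasurableEquiv.piFinSuccAbove_apply, Fin.prod_univ_succ, Fin.tail]
      _ = ∫⁻ y, ρ 0 y.1 * ∏ j, ρ j.succ (y.2 j) ∂((μ 0).prod (Measure.pi fun j => μ ((0:Fin (n+1)).succAbove j))) := by
          rw [← hp.map_eq, lintegral_map hmeas e.measurable]
      _ = (∫⁻ t, ρ 0 t ∂μ 0) * ∫⁻ z, ∏ j, ρ j.succ (z j) ∂Measure.pi (fun j : Fin n => μ j.succ) := by
          rw [hpi]
          exact lintegral_prod_mul (hρ 0).aemeasurable
            (Finset.measurable_prod _ fun (j : Fin n) _ => (hρ j.succ).comp (measurable_pi_apply j)).aemeasurable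
      _ = ∏ i, ∫⁻ t, ρ i t ∂(μ i) := by
          rw [ih _ _ (fun j : Fin n => hρ j.succ), Fin.prod_univ_succ]

lemma pi_eq_withDensity {n : ℕ} (q : Fin n → Measure ℝ) [∀ i, IsProbabilityMeasure (q i)]
    (hqac : ∀ i, q i ≪ volume) :
    Measure.pi q = (volume : Measure (Fin n → ℝ)).withDensity
      (fun x => ∏ i, (q i).rnDeriv volume (x i)) := by
  have hρ : ∀ i, Measurable ((q i).rnDeriv volume) := fun i => Measure.measurable_rnDeriv _ _
  refine Measure.pi_eq fun s hs => ?_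
  rw [withDensity_apply _ (MeasurableSet.univ_pi hs)]
  have hind : ∀ x : Fin n → ℝ, (Set.univ.pi s).indicator
      (fun x => ∏ i, (q i).rnDeriv volume (x i)) x
      = ∏ i, (s i).indicator ((q i).rnDeriv volume) (x i) := by
    intro x
    by_cases hx : x ∈ Set.univ.pi s
    · rw [Set.indicator_of_mem hx]
      exact Finset.prod_congr rfl fun i _ =>
        (Set.indicator_of_mem (hx i (Set.mem_univ i)) _).symm
    · rw [Set.indicator_of_notMem hx]
      rw [Set.mem_univ_pi] at hx
      push_neg at hx
      obtain ⟨i, hi⟩ := hx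
      exact (Finset.prod_eq_zero (Finset.mem_univ i)
        (by rw [Set.indicator_of_notMem hi])).symm
  rw [← lintegral_indicator (MeasurableSet.univ_pi hs), lintegral_congr hind, volume_pi,
    lintegral_pi_prod _ _ (fun i => (hρ i).indicator (hs i))]
  refine Finset.prod_congr rfl fun i _ => ?_
  rw [lintegral_indicator (hs i) _, ← withDensity_apply _ (hs i),
    Measure.withDensity_rnDeriv_eq _ _ (hqac i)]

lemma map_eval_pi {n : ℕ} (q : Fin n → Measure ℝ) [∀ i, IsProbabilityMeasure (q i)] (k : Fin n) :
    (Measure.pi q).map (Function.eval k) = q k := by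
  refine Measure.ext fun s hs => ?_
  rw [Measure.map_apply (measurable_pi_apply k) hs, Set.eval_preimage, Measure.pi_pi]
  refine Eq.trans (Fintype.prod_eq_single k fun j hj => ?_) (by rw [Function.update_self])
  rw [Function.update_of_ne hj]
  exact measure_univ

lemma measurePreserving_eval {n : ℕ} (q : Fin n → Measure ℝ) [∀ i, IsProbabilityMeasure (q i)]
    (k : Fin n) : MeasurePreserving (Function.eval k) (Measure.pi q) (q k) :=
  ⟨measurable_pi_apply k, map_eval_pi q k⟩

lemma log_rnDeriv_integrable {q : Measure ℝ} [IsProbabilityMeasure q] (hq : q ≪ volume)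
    (hent : Integrable
      (fun x => (q.rnDeriv volume x).toReal * Real.log ((q.rnDeriv volume x).toReal)) volume) :
    Integrable (fun t => Real.log ((q.rnDeriv volume t).toReal)) q := by
  have h := (integrable_withDensity_iff (Measure.measurable_rnDeriv q volume)
    (Measure.rnDeriv_lt_top q volume)
    (g := fun t => Real.log ((q.rnDeriv volume t).toReal))).mpr
  rw [Measure.withDensity_rnDeriv_eq _ _ hq] at h
  exact h (by simpa [mul_comm] using hent)

lemma ae_rnDeriv_pos {q : Measure ℝ} [IsProbabilityMeasure q] (hq : q ≪ volume) :
    ∀ᵐ t ∂q, 0 < q.rnDeriv volume t ∧ q.rnDeriv volume t < ⊤ :=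
  (Measure.rnDeriv_pos hq).and (hq.ae_le (Measure.rnDeriv_lt_top _ _))

lemma klAux {α : Type*} [MeasureSpace α] [SigmaFinite (volume : Measure α)]
    (q : Measure α) [SigmaFinite q] (hq : q ≪ volume)
    (W : α → ℝ) (hW : Measurable W) {c : ℝ} (hc : 0 < c) :
    q ≪ volume.withDensity (fun x => ENNReal.ofReal (Real.exp (-W x) / c)) ∧
    ∀ᵐ x ∂q, Real.log ((q.rnDeriv (volume.withDensity
        (fun x => ENNReal.ofReal (Real.exp (-W x) / c))) x).toReal)
      = W x + Real.log c + Real.log ((q.rnDeriv volume x).toReal) := by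
  set g := fun x => ENNReal.ofReal (Real.exp (-W x) / c) with hg
  have hgm : Measurable g := (Real.measurable_exp.comp hW.neg).div_const c |>.ennreal_ofReal
  have hg0 : ∀ x, g x ≠ 0 := fun x =>
    (ENNReal.ofReal_pos.mpr (div_pos (Real.exp_pos _) hc)).ne'
  have hgt : ∀ x, g x ≠ ⊤ := fun x => ENNReal.ofReal_ne_top
  have hvac : volume ≪ volume.withDensity g :=
    withDensity_absolutelyContinuous' hgm.aemeasurable (ae_of_all _ hg0)
  have hrd := Measure.rnDeriv_withDensity_right q volume hgm.aemeasurable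
    (ae_of_all _ hg0) (ae_of_all _ hgt)
  refine ⟨hq.trans hvac, ?_⟩
  filter_upwards [hq.ae_le hrd, Measure.rnDeriv_pos hq,
    hq.ae_le (Measure.rnDeriv_lt_top q volume)] with x h1 h2 h3
  rw [h1, ENNReal.toReal_mul, ENNReal.toReal_inv,
    ENNReal.toReal_ofReal (div_nonneg (Real.exp_pos _).le hc.le),
    Real.log_mul (inv_ne_zero (div_pos (Real.exp_pos _) hc).ne')
      (ENNReal.toReal_pos h2.ne' h3.ne).ne',
    Real.log_inv, Real.log_div (Real.exp_ne_zero _) hc.ne', Real.log_exp]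
  ring

lemma exp_integral_pos {α : Type*} [MeasureSpace α] [TopologicalSpace α]
    [(volume : Measure α).IsOpenPosMeasure] [Nonempty α] {f : α → ℝ}
    (hf : Integrable (fun x => Real.exp (-f x))) : 0 < ∫ x, Real.exp (-f x) := by
  rw [integral_pos_iff_support_of_nonneg (fun x => (Real.exp_pos _).le) hf]
  have hs : Function.support (fun x => Real.exp (-f x)) = Set.univ :=
    Set.eq_univ_of_forall fun x => (Real.exp_pos _).ne'
  rw [hs]
  exact isOpen_univ.measure_pos _ Set.univ_nonempty

lemma integrable_comp_eval {n : ℕ} (q : Fin n → Measure ℝ) [∀ i, IsProbabilityMeasure (q i)]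
    (k : Fin n) {g : ℝ → ℝ} (h : Integrable g (q k)) :
    Integrable (fun x : Fin n → ℝ => g (x k)) (Measure.pi q) := by
  exact ((_root_.measurePreserving_eval q k).integrable_comp h.aestronglyMeasurable).mpr h

lemma integral_comp_eval {n : ℕ} (q : Fin n → Measure ℝ) [∀ i, IsProbabilityMeasure (q i)]
    (k : Fin n) {g : ℝ → ℝ} (hg : AEStronglyMeasurable g (q k)) :
    ∫ x : Fin n → ℝ, g (x k) ∂Measure.pi q = ∫ t, g t ∂q k := by
  have hmp := _root_.measurePreserving_eval q k
  rw [← hmp.map_eq, integral_map (measurable_pi_apply k).aemeasurable (by rwa [hmp.map_eq])]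

/-- Coordinatewise decomposition of the KL divergence over the mean-field family:
for `q = q¹ ⊗ ⋯ ⊗ q^m ∈ Q` with `V` `q`-integrable and all marginal entropies finite,
`D_KL(q‖p) = D_KL(qⁱ ‖ T_i(q^{−i})) − H(q^{−i}) + log Z − log ∫ e^{−V̄_i(x, q^{−i})} dx`. -/
theorem KL_coordinate_decomposition (m : ℕ) (V : (Fin (m + 1) → ℝ) → ℝ)
    (hVcont : Continuous V) (hVint : Integrable fun x => Real.exp (-V x))
    (qi : Fin (m + 1) → Measure ℝ)
    (hprob : ∀ k, IsProbabilityMeasure (qi k)) (hac : ∀ k, qi k ≪ volume)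
    (hVq : Integrable V (Measure.pi qi))
    (hent : ∀ k, Integrable
      (fun x => ((qi k).rnDeriv volume x).toReal * Real.log (((qi k).rnDeriv volume x).toReal)))
    (i : Fin (m + 1))
    (hVbarint : Integrable fun x =>
      Real.exp (-(Vbar V i (Measure.pi fun k : Fin m => qi (i.succAbove k)) x))) :
    KL (Measure.pi qi) (target V)
      = KL (qi i) (Ti V i (Measure.pi fun k : Fin m => qi (i.succAbove k)))
        + ((- entropy (Measure.pi fun k : Fin m => qi (i.succAbove k))
            + Real.log (∫ y, Real.exp (-V y))
            - Real.log (∫ x, Real.exp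
                (-(Vbar V i (Measure.pi fun k : Fin m => qi (i.succAbove k)) x))) : ℝ) : EReal) := by
  classical
  haveI hpr : ∀ k, IsProbabilityMeasure (qi k) := hprob
  haveI hprm : ∀ k : Fin m, IsProbabilityMeasure (qi (i.succAbove k)) := fun k => hprob _
  set μm := Measure.pi fun k : Fin m => qi (i.succAbove k) with hμm
  haveI : IsProbabilityMeasure μm := by rw [hμm]; infer_instance
  haveI : IsProbabilityMeasure (Measure.pi qi) := by infer_instance
  set Z := ∫ y, Real.exp (-V y) with hZ
  set Vb := Vbar V i μm with hVbdef
  set Zi := ∫ x, Real.exp (-(Vb x)) with hZidef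
  set L : Fin (m + 1) → ℝ :=
    fun k => ∫ t, Real.log (((qi k).rnDeriv volume t).toReal) ∂qi k with hLdef
  set A := ∫ x, V x ∂Measure.pi qi with hA
  -- positivity of normalisation constants
  have hZpos : 0 < Z := hZ ▸ exp_integral_pos hVint
  have hZipos : 0 < Zi := hZidef ▸ exp_integral_pos hVbarint
  -- measurability of Vb
  have hVbm : Measurable Vb := by
    have hcont : Continuous fun p : ℝ × (Fin m → ℝ) => V (i.insertNth p.1 p.2) := by
      refine hVcont.comp (continuous_pi fun j => ?_)
      refine Fin.succAboveCases i ?_ ?_ j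
      · simp only [Fin.insertNth_apply_same]; exact continuous_fst
      · intro k; simp only [Fin.insertNth_apply_succAbove]
        exact (continuous_apply k).comp continuous_snd
    exact (hcont.stronglyMeasurable.integral_prod_right').measurable
  -- product density facts
  have hFmeas : Measurable fun x : Fin (m+1) → ℝ => ∏ k, (qi k).rnDeriv volume (x k) :=
    Finset.measurable_prod _ fun k _ =>
      (Measure.measurable_rnDeriv _ _).comp (measurable_pi_apply k)
  have hpiq : Measure.pi qi
      = volume.withDensity (fun x => ∏ k, (qi k).rnDeriv volume (x k)) :=
    pi_eq_withDensity qi hac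
  have hqac : Measure.pi qi ≪ volume := hpiq ▸ withDensity_absolutelyContinuous _ _
  have hrdF : (Measure.pi qi).rnDeriv volume
      =ᵐ[volume] fun x => ∏ k, (qi k).rnDeriv volume (x k) := by
    have h := Measure.rnDeriv_withDensity (volume : Measure (Fin (m+1) → ℝ)) hFmeas
    rwa [← hpiq] at h
  have haepos : ∀ᵐ x ∂Measure.pi qi, ∀ k, 0 < (qi k).rnDeriv volume (x k)
      ∧ (qi k).rnDeriv volume (x k) < ⊤ :=
    ae_all_iff.mpr fun k =>
      (Measure.tendsto_eval_ae_ae (μ := qi) (i := k)).eventually (ae_rnDeriv_pos (hac k))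
  have hlogF : ∀ᵐ x ∂Measure.pi qi, Real.log (((Measure.pi qi).rnDeriv volume x).toReal)
      = ∑ k, Real.log (((qi k).rnDeriv volume (x k)).toReal) := by
    filter_upwards [hqac.ae_le hrdF, haepos] with x h1 h2
    rw [h1, ENNReal.toReal_prod, Real.log_prod]
    exact fun k _ => (ENNReal.toReal_pos (h2 k).1.ne' (h2 k).2.ne).ne'
  -- integrability of the log-density pieces
  have hLint : ∀ k, Integrable (fun t => Real.log (((qi k).rnDeriv volume t).toReal)) (qi k) :=
    fun k => log_rnDeriv_integrable (hac k) (hent k)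
  have hsum_int : Integrable
      (fun x : Fin (m+1) → ℝ => ∑ k, Real.log (((qi k).rnDeriv volume (x k)).toReal))
      (Measure.pi qi) :=
    integrable_finset_sum _ fun k _ => integrable_comp_eval qi k (hLint k)
  -- KL for the full measure
  obtain ⟨hqt, hlogt⟩ := klAux (Measure.pi qi) hqac V hVcont.measurable hZpos
  have htarget : target V = volume.withDensity
      (fun x => ENNReal.ofReal (Real.exp (-V x) / Z)) := by rw [hZ]; rfl
  have hcomb : (fun x => Real.log (((Measure.pi qi).rnDeriv (target V) x).toReal))
      =ᵐ[Measure.pi qi] fun x =>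
        V x + Real.log Z + ∑ k, Real.log (((qi k).rnDeriv volume (x k)).toReal) := by
    rw [htarget]
    filter_upwards [hlogt, hlogF] with x h1 h2
    rw [h1, h2]
  have hRHSint : Integrable
      (fun x : Fin (m+1) → ℝ => V x + Real.log Z
        + ∑ k, Real.log (((qi k).rnDeriv volume (x k)).toReal)) (Measure.pi qi) :=
    (hVq.add (integrable_const _)).add hsum_int
  have hKL1int : Integrable
      (fun x => Real.log (((Measure.pi qi).rnDeriv (target V) x).toReal)) (Measure.pi qi) :=
    hRHSint.congr hcomb.symm
  have hKL1 : KL (Measure.pi qi) (target V) = ((A + Real.log Z + ∑ k, L k : ℝ) : EReal) := by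
    have hqt2 : Measure.pi qi ≪ target V := htarget ▸ hqt
    simp only [KL]
    rw [if_pos (And.intro hqt2 hKL1int)]
    congr 1
    have hI1 : Integrable (fun x : Fin (m+1) → ℝ => V x + Real.log Z) (Measure.pi qi) :=
      hVq.add (integrable_const _)
    rw [integral_congr_ae hcomb, integral_add hI1 hsum_int,
      integral_add hVq (integrable_const _), integral_const, probReal_univ,
      integral_finset_sum _ (fun k _ => integrable_comp_eval qi k (hLint k))]
    simp only [ENNReal.toReal_one, smul_eq_mul, one_mul]
    rw [hA]
    congr 1
    exact Finset.sum_congr rfl fun k _ => integral_comp_eval qi k (hLint k).aestronglyMeasurable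
  -- Fubini: relating A and the integral of Vb
  have hp := measurePreserving_piFinSuccAbove qi i
  set e := MeasurableEquiv.piFinSuccAbove (fun _ : Fin (m+1) => ℝ) i with he
  have hps : MeasurePreserving (⇑e.symm) ((qi i).prod μm) (Measure.pi qi) :=
    MeasurePreserving.symm e hp
  have hVe : Integrable (fun p : ℝ × (Fin m → ℝ) => V (i.insertNth p.1 p.2))
      ((qi i).prod μm) := by
    have h := (hps.integrable_comp_emb (MeasurableEquiv.measurableEmbedding e.symm)).mpr hVq
    have hfun : (V ∘ ⇑e.symm) = fun p : ℝ × (Fin m → ℝ) => V (i.insertNth p.1 p.2) := by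
      funext p
      simp [he, MeasurableEquiv.piFinSuccAbove_symm_apply, Fin.insertNthEquiv]
    rwa [hfun] at h
  have hAi : ∫ t, Vb t ∂qi i = A := by
    have h1 : ∫ p, V (i.insertNth p.1 p.2) ∂((qi i).prod μm) = A := by
      have h2 := hps.integral_comp' V
      have hfun : ∀ p : ℝ × (Fin m → ℝ), V (e.symm p) = V (i.insertNth p.1 p.2) := by
        intro p
        simp [he, MeasurableEquiv.piFinSuccAbove_symm_apply, Fin.insertNthEquiv]
      rw [hA, ← h2]
      exact integral_congr_ae (ae_of_all _ hfun)
    rw [integral_prod _ hVe] at h1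
    exact h1
  have hVbq : Integrable Vb (qi i) := hVe.integral_prod_left
  -- KL for the i-th coordinate against Ti
  obtain ⟨hqTi, hlogTi⟩ := klAux (qi i) (hac i) Vb hVbm hZipos
  have hTi : Ti V i μm = volume.withDensity
      (fun t => ENNReal.ofReal (Real.exp (-(Vb t)) / Zi)) := by rw [hZidef, hVbdef]; rfl
  have hKL2 : KL (qi i) (Ti V i μm) = ((A + Real.log Zi + L i : ℝ) : EReal) := by
    rw [hTi]
    have hcomb2 : (fun t => Real.log (((qi i).rnDeriv (volume.withDensity
        (fun t => ENNReal.ofReal (Real.exp (-(Vb t)) / Zi))) t).toReal))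
        =ᵐ[qi i] fun t =>
          Vb t + Real.log Zi + Real.log (((qi i).rnDeriv volume t).toReal) := hlogTi
    have hRHS2 : Integrable (fun t => Vb t + Real.log Zi
        + Real.log (((qi i).rnDeriv volume t).toReal)) (qi i) :=
      (hVbq.add (integrable_const _)).add (hLint i)
    have hKL2int : Integrable (fun t => Real.log (((qi i).rnDeriv (volume.withDensity
        (fun t => ENNReal.ofReal (Real.exp (-(Vb t)) / Zi))) t).toReal)) (qi i) :=
      hRHS2.congr hcomb2.symm
    simp only [KL]
    rw [if_pos (And.intro hqTi hKL2int)]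
    congr 1
    have hI2 : Integrable (fun t : ℝ => Vb t + Real.log Zi) (qi i) :=
      hVbq.add (integrable_const _)
    rw [integral_congr_ae hcomb2, integral_add hI2 (hLint i),
      integral_add hVbq (integrable_const _), integral_const, probReal_univ, hAi]
    simp only [ENNReal.toReal_one, smul_eq_mul, one_mul]
    rfl
  -- entropy of the product of the remaining coordinates
  have hFm_meas : Measurable fun y : Fin m → ℝ =>
      ∏ k, (qi (i.succAbove k)).rnDeriv volume (y k) :=
    Finset.measurable_prod _ fun k _ =>
      (Measure.measurable_rnDeriv _ _).comp (measurable_pi_apply k)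
  have hFm : μm = volume.withDensity
      (fun y : Fin m → ℝ => ∏ k, (qi (i.succAbove k)).rnDeriv volume (y k)) := by
    rw [hμm]; exact pi_eq_withDensity _ (fun k => hac _)
  have hμmac : μm ≪ volume := hFm ▸ withDensity_absolutelyContinuous _ _
  have hrdm : μm.rnDeriv volume =ᵐ[volume]
      fun y : Fin m → ℝ => ∏ k, (qi (i.succAbove k)).rnDeriv volume (y k) := by
    have h := Measure.rnDeriv_withDensity (volume : Measure (Fin m → ℝ)) hFm_meas
    rwa [← hFm] at h
  have haeposm : ∀ᵐ y ∂μm, ∀ k : Fin m, 0 < (qi (i.succAbove k)).rnDeriv volume (y k)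
      ∧ (qi (i.succAbove k)).rnDeriv volume (y k) < ⊤ := by
    rw [hμm]
    exact ae_all_iff.mpr fun k =>
      (Measure.tendsto_eval_ae_ae (μ := fun j : Fin m => qi (i.succAbove j))
        (i := k)).eventually (ae_rnDeriv_pos (hac (i.succAbove k)))
  have hlogm : (fun y => Real.log ((μm.rnDeriv volume y).toReal)) =ᵐ[μm]
      fun y : Fin m → ℝ =>
        ∑ k : Fin m, Real.log (((qi (i.succAbove k)).rnDeriv volume (y k)).toReal) := by
    filter_upwards [hμmac.ae_le hrdm, haeposm] with y h1 h2
    rw [h1, ENNReal.toReal_prod, Real.log_prod]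
    exact fun k _ => (ENNReal.toReal_pos (h2 k).1.ne' (h2 k).2.ne).ne'
  have hintk : ∀ k : Fin m, Integrable
      (fun y : Fin m → ℝ =>
        Real.log (((qi (i.succAbove k)).rnDeriv volume (y k)).toReal)) μm := by
    intro k; rw [hμm]; exact _root_.integrable_comp_eval (g := fun t => Real.log (((qi (i.succAbove k)).rnDeriv volume t).toReal)) _ k (hLint _)
  have hsmul : ∫ y, (μm.rnDeriv volume y).toReal
      * Real.log ((μm.rnDeriv volume y).toReal) ∂volume
      = ∫ y, Real.log ((μm.rnDeriv volume y).toReal) ∂μm :=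
    MeasureTheory.integral_rnDeriv_smul hμmac
  have hentm : entropy μm = - ∑ k : Fin m, L (i.succAbove k) := by
    simp only [entropy]
    rw [hsmul, integral_congr_ae hlogm, integral_finset_sum _ (fun k _ => hintk k), neg_inj]
    refine Finset.sum_congr rfl fun k _ => ?_
    rw [hμm, hLdef]
    exact _root_.integral_comp_eval (g := fun t => Real.log (((qi (i.succAbove k)).rnDeriv volume t).toReal)) _ k (hLint _).aestronglyMeasurable
  -- final assembly
  rw [hKL1, hKL2, hentm]
  rw [← EReal.coe_add, EReal.coe_eq_coe_iff, Fin.sum_univ_succAbove L i]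
  ring


end
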